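/- arXiv:1202.3677 — 2 statements merged into one kernel-verified Lean document; each statement's English description precedes it below -/
import Mathlib

section
/- Let α, β, γ, δ be closed smooth 1-forms on M. Then g(R(α♯,β♯)γ♯,δ♯) = R₁ + R₂ + R₃, where R₁ = (1/4)( −α♯γ♯δ(β♯) + α♯δ♯β(γ♯) + β♯γ♯δ(α♯) − β♯δ♯α(γ♯) − γ♯α♯δ(β♯) + γ♯β♯δ(α♯) + δ♯α♯β(γ♯) − δ♯β♯α(γ♯) ), R₂ = (1/4)( −g⁻¹(d(γ(β♯)), d(δ(α♯))) + g⁻¹(d(γ(α♯)), d(δ(β♯))) ), and R₃ = (1/4)( g([δ♯,α♯],[β♯,γ♯]) − g([δ♯,β♯],[α♯,γ♯]) + 2 g([α♯,β♯],[γ♯,δ♯]) ). Here an expression such as α♯γ♯δ(β♯) denotes the iterated directional derivative of the smooth function δ(β♯) first along the vector field γ♯ and then along α♯. -/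
/-!
Local-coordinate (chart) model of a Riemannian manifold: points are elements
of `ℝⁿ`, vector fields and 1-forms are given by their component functions on
an open set `U`, and the metric by its matrix of components.
-/

noncomputable section

namespace RG

/-- Points of the chart. -/
abbrev Pt (n : ℕ) : Type := Fin n → ℝ
/-- Vector fields, by components. -/
abbrev VF (n : ℕ) : Type := Pt n → Fin n → ℝ
/-- 1-forms, by components. -/
abbrev OneForm (n : ℕ) : Type := Pt n → Fin n → ℝ
/-- Metric tensors, by components. -/
abbrev Met (n : ℕ) : Type := Pt n → Matrix (Fin n) (Fin n) ℝ

variable {n : ℕ}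

/-- Partial derivative `∂ₛ f`. -/
def pd (s : Fin n) (f : Pt n → ℝ) : Pt n → ℝ := fun x => fderiv ℝ f x (Pi.single s 1)

/-- Directional derivative `X f` of a function along a vector field. -/
def dder (X : VF n) (f : Pt n → ℝ) : Pt n → ℝ := fun x => fderiv ℝ f x (X x)

/-- Lie bracket `[X, Y]` of vector fields. -/
def bracket (X Y : VF n) : VF n :=
  fun x k => fderiv ℝ (fun y => Y y k) x (X x) - fderiv ℝ (fun y => X y k) x (Y x)

/-- The inverse (co-)metric `g⁻¹`. -/
def ginv (g : Met n) : Met n := fun x => (g x)⁻¹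

/-- Pairing `α(X)` of a 1-form with a vector field. -/
def pairF (α : OneForm n) (X : VF n) : Pt n → ℝ := fun x => ∑ i, α x i * X x i

/-- Metric inner product `g(X,Y)` of vector fields. -/
def gV (g : Met n) (X Y : VF n) : Pt n → ℝ := fun x => ∑ i, ∑ j, g x i j * X x i * Y x j

/-- Co-metric inner product `g⁻¹(α,β)` of 1-forms. -/
def gF (g : Met n) (α β : OneForm n) : Pt n → ℝ :=
  fun x => ∑ i, ∑ j, ginv g x i j * α x i * β x j

/-- Raising indices: `α♯ = g⁻¹ α`. -/
def sharp (g : Met n) (α : OneForm n) : VF n := fun x k => ∑ i, ginv g x i k * α x i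

/-- Lowering indices: `X♭ = g X`. -/
def flat (g : Met n) (X : VF n) : OneForm n := fun x k => ∑ i, g x i k * X x i

/-- Differential `df` of a function, as a 1-form. -/
def dF (f : Pt n → ℝ) : OneForm n := fun x i => pd i f x

/-- Exterior derivative of a 1-form, evaluated on two vector fields:
`dα(X,Y) = Σ (∂ᵢα_j − ∂_jαᵢ) Xⁱ Y^j`. -/
def dOne (α : OneForm n) (X Y : VF n) : Pt n → ℝ :=
  fun x => ∑ i, ∑ j, (pd i (fun y => α y j) x - pd j (fun y => α y i) x) * X x i * Y x j

/-- Christoffel symbols `Γ^k_{ij}` of the Levi-Civita connection. -/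
def chr (g : Met n) (k i j : Fin n) : Pt n → ℝ :=
  fun x => (1/2) * ∑ l, ginv g x k l *
    (pd i (fun y => g y j l) x + pd j (fun y => g y i l) x - pd l (fun y => g y i j) x)

/-- Levi-Civita covariant derivative `∇_X Y` of a vector field. -/
def covV (g : Met n) (X Y : VF n) : VF n :=
  fun x k => fderiv ℝ (fun y => Y y k) x (X x) + ∑ i, ∑ j, chr g k i j x * X x i * Y x j

/-- Levi-Civita covariant derivative `∇_X α` of a 1-form, characterized by
`(∇_X α)(Y) = X(α(Y)) − α(∇_X Y)`. -/
def covF (g : Met n) (X : VF n) (α : OneForm n) : OneForm n :=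
  fun x j => fderiv ℝ (fun y => α y j) x (X x) - ∑ i, ∑ k, X x i * chr g k i j x * α x k

/-- Riemann curvature tensor `R(X,Y)Z = ∇_X∇_Y Z − ∇_Y∇_X Z − ∇_{[X,Y]}Z`. -/
def Rcurv (g : Met n) (X Y Z : VF n) : VF n :=
  covV g X (covV g Y Z) - covV g Y (covV g X Z) - covV g (bracket X Y) Z

/-- Lie derivative of a 1-form along a vector field. -/
def lieF (X : VF n) (α : OneForm n) : OneForm n :=
  fun x i => fderiv ℝ (fun y => α y i) x (X x) + ∑ s, α x s * pd i (fun y => X y s) x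

/-- Lie derivative of a contravariant 2-tensor (such as the co-metric `g⁻¹`). -/
def lieCo (X : VF n) (G : Met n) : Met n :=
  fun x => Matrix.of fun i j =>
    fderiv ℝ (fun y => G y i j) x (X x)
      - ∑ s, G x s j * pd s (fun y => X y i) x
      - ∑ s, G x i s * pd s (fun y => X y j) x

/-- Evaluation of a contravariant 2-tensor on a pair of 1-forms. -/
def evCo (G : Met n) (α β : OneForm n) : Pt n → ℝ :=
  fun x => ∑ i, ∑ j, G x i j * α x i * β x j

/-- Smoothness of (the components of) a 1-form or vector field on `U`. -/
def SmoothSec (U : Set (Pt n)) (ω : Pt n → Fin n → ℝ) : Prop :=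
  ∀ i, ContDiffOn ℝ (⊤ : ℕ∞) (fun y => ω y i) U

/-- Smoothness of the metric components on `U`. -/
def SmoothMet (U : Set (Pt n)) (g : Met n) : Prop :=
  ∀ i j, ContDiffOn ℝ (⊤ : ℕ∞) (fun y => g y i j) U

/-- `g` is a smooth Riemannian metric on `U`. -/
def IsRiemannOn (U : Set (Pt n)) (g : Met n) : Prop :=
  SmoothMet U g ∧ ∀ x ∈ U, (g x).IsSymm ∧ (g x).PosDef

/-- A 1-form is closed on `U`. -/
def IsClosedOn (U : Set (Pt n)) (α : OneForm n) : Prop :=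
  ∀ x ∈ U, ∀ i j, pd i (fun y => α y j) x = pd j (fun y => α y i) x

end RG


/-! ### Toolkit -/

namespace RG

open Filter Topology Matrix

variable {n : ℕ} {U : Set (Pt n)}

/-- Smooth scalar function on `U`. -/
abbrev SmF (U : Set (Pt n)) (f : Pt n → ℝ) : Prop := ContDiffOn ℝ (⊤ : ℕ∞) f U

theorem SmF.dat {f : Pt n → ℝ} (hU : IsOpen U) (hf : SmF U f) {x : Pt n} (hx : x ∈ U) :
    DifferentiableAt ℝ f x :=
  ((hf.contDiffAt (hU.mem_nhds hx)).differentiableAt (by simp))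

theorem dder_congr {f f' : Pt n → ℝ} {X : VF n} (hU : IsOpen U) {x : Pt n} (hx : x ∈ U)
    (h : ∀ y ∈ U, f y = f' y) : dder X f x = dder X f' x := by
  unfold dder
  rw [Filter.EventuallyEq.fderiv_eq (Filter.eventuallyEq_of_mem (hU.mem_nhds hx) h)]

theorem pd_congr {f f' : Pt n → ℝ} {s : Fin n} (hU : IsOpen U) {x : Pt n} (hx : x ∈ U)
    (h : ∀ y ∈ U, f y = f' y) : pd s f x = pd s f' x := by
  unfold pd
  rw [Filter.EventuallyEq.fderiv_eq (Filter.eventuallyEq_of_mem (hU.mem_nhds hx) h)]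

theorem fderiv_basis {f : Pt n → ℝ} {x : Pt n} (hf : DifferentiableAt ℝ f x) (v : Pt n) :
    fderiv ℝ f x v = ∑ s, v s * pd s f x := by
  have hv : v = ∑ s : Fin n, v s • (Pi.single s 1 : Pt n) := by
    funext j
    simp [Finset.sum_apply, Pi.single_apply]
  conv_lhs => rw [hv]
  rw [map_sum]
  exact Finset.sum_congr rfl fun s _ => by simp [pd, smul_eq_mul]

theorem dder_eq_sum_pd {f : Pt n → ℝ} {x : Pt n} (hf : DifferentiableAt ℝ f x) (X : VF n) :
    dder X f x = ∑ s, X x s * pd s f x := fderiv_basis hf (X x)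

theorem dder_add {f h : Pt n → ℝ} {X : VF n} {x : Pt n} (hf : DifferentiableAt ℝ f x)
    (hh : DifferentiableAt ℝ h x) :
    dder X (fun y => f y + h y) x = dder X f x + dder X h x := by
  simp [dder, fderiv_fun_add hf hh]

theorem dder_sub {f h : Pt n → ℝ} {X : VF n} {x : Pt n} (hf : DifferentiableAt ℝ f x)
    (hh : DifferentiableAt ℝ h x) :
    dder X (fun y => f y - h y) x = dder X f x - dder X h x := by
  simp [dder, fderiv_fun_sub hf hh]

theorem dder_mul {f h : Pt n → ℝ} {X : VF n} {x : Pt n} (hf : DifferentiableAt ℝ f x)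
    (hh : DifferentiableAt ℝ h x) :
    dder X (fun y => f y * h y) x = dder X f x * h x + f x * dder X h x := by
  simp [dder, fderiv_fun_mul hf hh, smul_eq_mul]; ring

theorem dder_sum {ι : Type*} {s : Finset ι} {F : ι → Pt n → ℝ} {X : VF n} {x : Pt n}
    (hF : ∀ i ∈ s, DifferentiableAt ℝ (F i) x) :
    dder X (fun y => ∑ i ∈ s, F i y) x = ∑ i ∈ s, dder X (F i) x := by
  simp [dder, fderiv_fun_sum hF]

theorem dder_const_mul {h : Pt n → ℝ} {X : VF n} {x : Pt n} (c : ℝ)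
    (hh : DifferentiableAt ℝ h x) :
    dder X (fun y => c * h y) x = c * dder X h x := by
  simp [dder, fderiv_const_mul hh c]


theorem SmF.dder' {f : Pt n → ℝ} {X : VF n} (hU : IsOpen U) (hf : SmF U f)
    (hX : SmoothSec U X) : SmF U (dder X f) := by
  have h1 : ContDiffOn ℝ (⊤ : ℕ∞) (fderiv ℝ f) U := hf.fderiv_of_isOpen hU (by simp)
  exact h1.clm_apply (contDiffOn_pi.2 hX)

theorem SmF.pd' {f : Pt n → ℝ} (hU : IsOpen U) (hf : SmF U f) (s : Fin n) :
    SmF U (pd s f) := by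
  have : pd s f = dder (fun _ => Pi.single s 1) f := rfl
  rw [this]
  exact hf.dder' hU (fun i => contDiffOn_const)

theorem SmF.sum {ι : Type*} {s : Finset ι} {F : ι → Pt n → ℝ}
    (hF : ∀ i ∈ s, SmF U (F i)) : SmF U (fun y => ∑ i ∈ s, F i y) :=
  ContDiffOn.sum hF

theorem smooth_ginv (hU : IsOpen U) {g : Met n} (hg : IsRiemannOn U g) (i j : Fin n) :
    SmF U (fun y => ginv g y i j) := by
  have hmat : ∀ (A : Pt n → Matrix (Fin n) (Fin n) ℝ),
      (∀ a b, SmF U (fun y => A y a b)) → SmF U (fun y => (A y).det) := by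
    intro A hA
    have : (fun y => (A y).det)
        = fun y => ∑ σ : Equiv.Perm (Fin n), ((Equiv.Perm.sign σ : ℤ) : ℝ) * ∏ a, A y (σ a) a := by
      funext y
      rw [Matrix.det_apply]
      exact Finset.sum_congr rfl fun σ _ => by
        rcases Int.units_eq_one_or (Equiv.Perm.sign σ) with h | h <;> simp [h]
    rw [this]
    exact SmF.sum fun σ _ => contDiffOn_const.mul (contDiffOn_prod fun a _ => hA (σ a) a)
  have hdet : SmF U (fun y => (g y).det) := hmat _ (fun a b => hg.1 a b)
  have hdetne : ∀ y ∈ U, (g y).det ≠ 0 := fun y hy => ((hg.2 y hy).2.det_pos).ne'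
  have hadj : SmF U (fun y => (g y).adjugate i j) := by
    have : (fun y => (g y).adjugate i j)
        = fun y => ((g y).updateRow j (Pi.single i 1)).det := by
      funext y; rw [Matrix.adjugate_apply]
    rw [this]
    apply hmat
    intro a b
    by_cases hab : a = j
    · subst hab
      simpa using contDiffOn_const
    · have : (fun y => (g y).updateRow j (Pi.single i 1) a b) = fun y => g y a b := by
        funext y; rw [Matrix.updateRow_ne hab]
      rw [this]; exact hg.1 a b
  have : (fun y => ginv g y i j) = fun y => ((g y).det)⁻¹ * (g y).adjugate i j := by
    funext y
    show (g y)⁻¹ i j = _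
    rw [Matrix.inv_def, Ring.inverse_eq_inv']
    simp [Matrix.smul_apply, smul_eq_mul]
  rw [this]
  exact (hdet.inv hdetne).mul hadj

theorem gsymm {g : Met n} (hg : IsRiemannOn U g) {x : Pt n} (hx : x ∈ U) (i j : Fin n) :
    g x i j = g x j i := ((hg.2 x hx).1.apply i j).symm

theorem ginv_symm {g : Met n} (hg : IsRiemannOn U g) {x : Pt n} (hx : x ∈ U) (i j : Fin n) :
    ginv g x i j = ginv g x j i := by
  have h : ((g x)⁻¹)ᵀ = (g x)⁻¹ := by
    rw [Matrix.transpose_nonsing_inv, (hg.2 x hx).1.eq]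
  show (g x)⁻¹ i j = (g x)⁻¹ j i
  conv_lhs => rw [← h, Matrix.transpose_apply]

theorem ginv_mul {g : Met n} (hg : IsRiemannOn U g) {x : Pt n} (hx : x ∈ U) (l j : Fin n) :
    ∑ k, ginv g x l k * g x k j = if l = j then 1 else 0 := by
  have hdet : IsUnit (g x).det := (Ne.isUnit ((hg.2 x hx).2.det_pos).ne')
  have h := Matrix.nonsing_inv_mul (g x) hdet
  have h2 := congrFun (congrFun h l) j
  rw [Matrix.mul_apply] at h2
  show ∑ k, (g x)⁻¹ l k * g x k j = _
  rw [h2, Matrix.one_apply]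

theorem mul_ginv {g : Met n} (hg : IsRiemannOn U g) {x : Pt n} (hx : x ∈ U) (l j : Fin n) :
    ∑ k, g x l k * ginv g x k j = if l = j then 1 else 0 := by
  have hdet : IsUnit (g x).det := (Ne.isUnit ((hg.2 x hx).2.det_pos).ne')
  have h := Matrix.mul_nonsing_inv (g x) hdet
  have h2 := congrFun (congrFun h l) j
  rw [Matrix.mul_apply] at h2
  show ∑ k, g x l k * (g x)⁻¹ k j = _
  rw [h2, Matrix.one_apply]


variable {g : Met n} {α β : OneForm n} {X Y Z W : VF n} {x : Pt n}

theorem smooth_sharp (hU : IsOpen U) (hg : IsRiemannOn U g) (hα : SmoothSec U α) :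
    SmoothSec U (sharp g α) := fun k =>
  SmF.sum fun i _ => (smooth_ginv hU hg i k).mul (hα i)

theorem smooth_pairF (hα : SmoothSec U α) (hX : SmoothSec U X) : SmF U (pairF α X) :=
  SmF.sum fun i _ => (hα i).mul (hX i)

theorem smooth_gV (hg : IsRiemannOn U g) (hX : SmoothSec U X) (hY : SmoothSec U Y) :
    SmF U (gV g X Y) :=
  SmF.sum fun i _ => SmF.sum fun j _ => (((hg.1 i j).mul (hX i)).mul (hY j))

theorem smooth_gF (hU : IsOpen U) (hg : IsRiemannOn U g) (hα : SmoothSec U α)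
    (hβ : SmoothSec U β) : SmF U (gF g α β) :=
  SmF.sum fun i _ => SmF.sum fun j _ => (((smooth_ginv hU hg i j).mul (hα i)).mul (hβ j))

theorem smooth_chr (hU : IsOpen U) (hg : IsRiemannOn U g) (k i j : Fin n) :
    SmF U (chr g k i j) :=
  contDiffOn_const.mul (SmF.sum fun l _ => (smooth_ginv hU hg k l).mul
    (((SmF.pd' hU (hg.1 j l) i).add (SmF.pd' hU (hg.1 i l) j)).sub (SmF.pd' hU (hg.1 i j) l)))

theorem smooth_bracket (hU : IsOpen U) (hX : SmoothSec U X) (hY : SmoothSec U Y) :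
    SmoothSec U (bracket X Y) := fun k =>
  (SmF.dder' hU (hY k) hX).sub (SmF.dder' hU (hX k) hY)

theorem smooth_covV (hU : IsOpen U) (hg : IsRiemannOn U g) (hX : SmoothSec U X)
    (hY : SmoothSec U Y) : SmoothSec U (covV g X Y) := fun k =>
  (SmF.dder' hU (hY k) hX).add (SmF.sum fun i _ => SmF.sum fun j _ =>
    ((smooth_chr hU hg k i j).mul (hX i)).mul (hY j))

theorem smooth_dF (hU : IsOpen U) {f : Pt n → ℝ} (hf : SmF U f) : SmoothSec U (dF f) :=
  fun i => hf.pd' hU i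

/-- `g(α♯, X) = α(X)` on `U`. -/
theorem gV_sharp (hg : IsRiemannOn U g) (hx : x ∈ U) (α : OneForm n) (X : VF n) :
    gV g (sharp g α) X x = pairF α X x := by
  unfold gV sharp pairF
  rw [Finset.sum_comm]
  refine Finset.sum_congr rfl fun j _ => ?_
  calc ∑ i, g x i j * (∑ k, ginv g x k i * α x k) * X x j
      = ∑ i, ∑ k, ginv g x k i * g x i j * (α x k * X x j) := by
        refine Finset.sum_congr rfl fun i _ => ?_
        rw [Finset.mul_sum, Finset.sum_mul]
        exact Finset.sum_congr rfl fun k _ => by ring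
    _ = ∑ k, (∑ i, ginv g x k i * g x i j) * (α x k * X x j) := by
        rw [Finset.sum_comm]
        exact Finset.sum_congr rfl fun k _ => by rw [Finset.sum_mul]
    _ = α x j * X x j := by
        simp only [ginv_mul hg hx, ite_mul, one_mul, zero_mul]
        simp

/-- `g(X, α♯) = α(X)` on `U`. -/
theorem gV_sharp' (hg : IsRiemannOn U g) (hx : x ∈ U) (α : OneForm n) (X : VF n) :
    gV g X (sharp g α) x = pairF α X x := by
  rw [← gV_sharp hg hx α X]
  unfold gV
  rw [Finset.sum_comm]
  exact Finset.sum_congr rfl fun i _ => Finset.sum_congr rfl fun j _ => by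
    rw [gsymm hg hx i j]; ring

/-- `α(β♯) = β(α♯)` on `U`. -/
theorem pairF_symm (hg : IsRiemannOn U g) (hx : x ∈ U) (α β : OneForm n) :
    pairF α (sharp g β) x = pairF β (sharp g α) x := by
  unfold pairF sharp
  simp only [Finset.mul_sum]
  rw [Finset.sum_comm]
  refine Finset.sum_congr rfl fun i _ => ?_
  refine Finset.sum_congr rfl fun k _ => ?_
  rw [ginv_symm hg hx i k]
  ring

/-- `g(X,Y) = g(Y,X)` on `U`. -/
theorem gV_symm (hg : IsRiemannOn U g) (hx : x ∈ U) (X Y : VF n) :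
    gV g X Y x = gV g Y X x := by
  unfold gV
  rw [Finset.sum_comm]
  exact Finset.sum_congr rfl fun i _ => Finset.sum_congr rfl fun j _ => by
    rw [gsymm hg hx j i]; ring

theorem pairF_dF (hU : IsOpen U) {f : Pt n → ℝ} (hf : SmF U f) (hx : x ∈ U) (X : VF n) :
    pairF (dF f) X x = dder X f x := by
  unfold pairF dF
  rw [dder_eq_sum_pd (hf.dat hU hx)]
  exact Finset.sum_congr rfl fun s _ => by ring

theorem gF_eq (hg : IsRiemannOn U g) (hx : x ∈ U) (α β : OneForm n) :
    gF g α β x = pairF α (sharp g β) x := by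
  unfold gF pairF sharp
  refine Finset.sum_congr rfl fun i _ => ?_
  rw [Finset.mul_sum]
  refine Finset.sum_congr rfl fun j _ => ?_
  rw [ginv_symm hg hx i j]
  ring


theorem sum_swap23 {M : Type*} [AddCommMonoid M] (f : Fin n → Fin n → Fin n → M) :
    ∑ i, ∑ j, ∑ k, f i j k = ∑ i, ∑ k, ∑ j, f i j k :=
  Finset.sum_congr rfl fun i _ => Finset.sum_comm

theorem sum_swap34 {M : Type*} [AddCommMonoid M] (f : Fin n → Fin n → Fin n → Fin n → M) :
    ∑ i, ∑ j, ∑ k, ∑ l, f i j k l = ∑ i, ∑ j, ∑ l, ∑ k, f i j k l :=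
  Finset.sum_congr rfl fun i _ => Finset.sum_congr rfl fun j _ => Finset.sum_comm

/-- Contraction of the Christoffel symbols with the metric. -/
theorem g_chr (hg : IsRiemannOn U g) (hx : x ∈ U) (a b j : Fin n) :
    ∑ k, g x k j * chr g k a b x
      = (1/2) * (pd a (fun y => g y b j) x + pd b (fun y => g y a j) x
          - pd j (fun y => g y a b) x) := by
  simp only [chr]
  calc
    ∑ k, g x k j * ((1/2) * ∑ l, ginv g x k l * (pd a (fun y => g y b l) x
        + pd b (fun y => g y a l) x - pd l (fun y => g y a b) x))
      = ∑ k, ∑ l, (ginv g x l k * g x k j) * ((1/2) * (pd a (fun y => g y b l) x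
          + pd b (fun y => g y a l) x - pd l (fun y => g y a b) x)) := by
        refine Finset.sum_congr rfl fun k _ => ?_
        rw [Finset.mul_sum, Finset.mul_sum]
        refine Finset.sum_congr rfl fun l _ => ?_
        rw [ginv_symm hg hx l k]
        ring
    _ = ∑ l, (∑ k, ginv g x l k * g x k j) * ((1/2) * (pd a (fun y => g y b l) x
          + pd b (fun y => g y a l) x - pd l (fun y => g y a b) x)) := by
        rw [Finset.sum_comm]
        exact Finset.sum_congr rfl fun l _ => (Finset.sum_mul _ _ _).symm
    _ = _ := by
        simp only [ginv_mul hg hx, ite_mul, one_mul, zero_mul]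
        rw [Finset.sum_ite_eq' Finset.univ j]
        simp

/-- Expansion of `g(∇_X Y, Z)`. -/
theorem gV_covV_expand (hg : IsRiemannOn U g) (hx : x ∈ U) (X Y Z : VF n) :
    gV g (covV g X Y) Z x
      = (∑ p, ∑ q, g x p q * dder X (fun y => Y y p) x * Z x q)
        + ∑ a, ∑ p, ∑ q, (1/2) * (pd a (fun y => g y p q) x + pd p (fun y => g y a q) x
            - pd q (fun y => g y a p) x) * (X x a * Y x p * Z x q) := by
  have step1 : gV g (covV g X Y) Z x
      = (∑ i, ∑ j, g x i j * dder X (fun y => Y y i) x * Z x j)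
        + ∑ i, ∑ j, ∑ a, ∑ b, g x i j * chr g i a b x * (X x a * Y x b * Z x j) := by
    unfold gV covV
    rw [← Finset.sum_add_distrib]
    refine Finset.sum_congr rfl fun i _ => ?_
    rw [← Finset.sum_add_distrib]
    refine Finset.sum_congr rfl fun j _ => ?_
    show g x i j * (dder X (fun y => Y y i) x + ∑ a, ∑ b, chr g i a b x * X x a * Y x b)
        * Z x j = _
    rw [mul_add, add_mul]
    congr 1
    rw [Finset.mul_sum, Finset.sum_mul]
    refine Finset.sum_congr rfl fun a _ => ?_
    rw [Finset.mul_sum, Finset.sum_mul]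
    exact Finset.sum_congr rfl fun b _ => by ring
  rw [step1]
  congr 1
  calc
    ∑ i, ∑ j, ∑ a, ∑ b, g x i j * chr g i a b x * (X x a * Y x b * Z x j)
      = ∑ i, ∑ a, ∑ j, ∑ b, g x i j * chr g i a b x * (X x a * Y x b * Z x j) :=
        Finset.sum_congr rfl fun _ _ => Finset.sum_comm
    _ = ∑ a, ∑ i, ∑ j, ∑ b, g x i j * chr g i a b x * (X x a * Y x b * Z x j) :=
        Finset.sum_comm
    _ = ∑ a, ∑ j, ∑ i, ∑ b, g x i j * chr g i a b x * (X x a * Y x b * Z x j) :=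
        Finset.sum_congr rfl fun a _ => Finset.sum_comm
    _ = ∑ a, ∑ j, ∑ b, ∑ i, g x i j * chr g i a b x * (X x a * Y x b * Z x j) :=
        Finset.sum_congr rfl fun _ _ => Finset.sum_congr rfl fun _ _ => Finset.sum_comm
    _ = ∑ a, ∑ b, ∑ j, ∑ i, g x i j * chr g i a b x * (X x a * Y x b * Z x j) :=
        Finset.sum_congr rfl fun _ _ => Finset.sum_comm
    _ = ∑ a, ∑ p, ∑ q, (1/2) * (pd a (fun y => g y p q) x + pd p (fun y => g y a q) x
          - pd q (fun y => g y a p) x) * (X x a * Y x p * Z x q) := by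
        refine Finset.sum_congr rfl fun a _ => Finset.sum_congr rfl fun p _ =>
          Finset.sum_congr rfl fun q _ => ?_
        calc
          ∑ i, g x i q * chr g i a p x * (X x a * Y x p * Z x q)
            = (∑ i, g x i q * chr g i a p x) * (X x a * Y x p * Z x q) :=
              (Finset.sum_mul _ _ _).symm
          _ = _ := by rw [g_chr hg hx a p q]


/-- Metric compatibility: `X g(Y,Z) = g(∇_X Y, Z) + g(Y, ∇_X Z)` on `U`. -/
theorem compat (hU : IsOpen U) (hg : IsRiemannOn U g) (hX : SmoothSec U X)
    (hY : SmoothSec U Y) (hZ : SmoothSec U Z) (hx : x ∈ U) :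
    dder X (gV g Y Z) x = gV g (covV g X Y) Z x + gV g Y (covV g X Z) x := by
  have dg : ∀ i j, DifferentiableAt ℝ (fun y => g y i j) x := fun i j =>
    SmF.dat hU (hg.1 i j) hx
  have dY : ∀ i, DifferentiableAt ℝ (fun y => Y y i) x := fun i => SmF.dat hU (hY i) hx
  have dZ : ∀ i, DifferentiableAt ℝ (fun y => Z y i) x := fun i => SmF.dat hU (hZ i) hx
  have lhs : dder X (gV g Y Z) x
      = ∑ i, ∑ j, ((∑ a, X x a * pd a (fun y => g y i j) x) * (Y x i * Z x j)
          + g x i j * dder X (fun y => Y y i) x * Z x j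
          + g x i j * Y x i * dder X (fun y => Z y j) x) := by
    unfold gV
    rw [dder_sum (fun i _ => DifferentiableAt.fun_sum fun j _ => ((dg i j).fun_mul (dY i)).fun_mul (dZ j))]
    refine Finset.sum_congr rfl fun i _ => ?_
    rw [dder_sum (fun j _ => ((dg i j).fun_mul (dY i)).fun_mul (dZ j))]
    refine Finset.sum_congr rfl fun j _ => ?_
    rw [dder_mul ((dg i j).fun_mul (dY i)) (dZ j), dder_mul (dg i j) (dY i),
      dder_eq_sum_pd (dg i j)]
    ring
  rw [lhs, gV_covV_expand hg hx X Y Z, gV_symm hg hx Y (covV g X Z),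
    gV_covV_expand hg hx X Z Y]
  have hsplit : ∑ i, ∑ j, ((∑ a, X x a * pd a (fun y => g y i j) x) * (Y x i * Z x j)
          + g x i j * dder X (fun y => Y y i) x * Z x j
          + g x i j * Y x i * dder X (fun y => Z y j) x)
      = (∑ i, ∑ j, (∑ a, X x a * pd a (fun y => g y i j) x) * (Y x i * Z x j))
        + (∑ i, ∑ j, g x i j * dder X (fun y => Y y i) x * Z x j)
        + (∑ i, ∑ j, g x i j * Y x i * dder X (fun y => Z y j) x) := by
    rw [← Finset.sum_add_distrib, ← Finset.sum_add_distrib]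
    exact Finset.sum_congr rfl fun i _ => by
      rw [← Finset.sum_add_distrib, ← Finset.sum_add_distrib]
  rw [hsplit]
  have hA3 : ∑ p, ∑ q, g x p q * dder X (fun y => Z y p) x * Y x q
      = ∑ i, ∑ j, g x i j * Y x i * dder X (fun y => Z y j) x := by
    rw [Finset.sum_comm]
    refine Finset.sum_congr rfl fun i _ => Finset.sum_congr rfl fun j _ => ?_
    rw [gsymm hg hx j i]
    ring
  rw [hA3]
  have hGam : (∑ a, ∑ p, ∑ q, (1/2) * (pd a (fun y => g y p q) x
          + pd p (fun y => g y a q) x - pd q (fun y => g y a p) x) * (X x a * Y x p * Z x q))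
        + (∑ a, ∑ p, ∑ q, (1/2) * (pd a (fun y => g y p q) x
          + pd p (fun y => g y a q) x - pd q (fun y => g y a p) x) * (X x a * Z x p * Y x q))
      = ∑ a, ∑ p, ∑ q, pd a (fun y => g y p q) x * (X x a * Y x p * Z x q) := by
    have hswap : (∑ a, ∑ p, ∑ q, (1/2) * (pd a (fun y => g y p q) x
          + pd p (fun y => g y a q) x - pd q (fun y => g y a p) x) * (X x a * Z x p * Y x q))
        = ∑ a, ∑ p, ∑ q, (1/2) * (pd a (fun y => g y q p) x
          + pd q (fun y => g y a p) x - pd p (fun y => g y a q) x) * (X x a * Z x q * Y x p) :=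
      Finset.sum_congr rfl fun a _ => Finset.sum_comm
    rw [hswap, ← Finset.sum_add_distrib]
    refine Finset.sum_congr rfl fun a _ => ?_
    rw [← Finset.sum_add_distrib]
    refine Finset.sum_congr rfl fun p _ => ?_
    rw [← Finset.sum_add_distrib]
    refine Finset.sum_congr rfl fun q _ => ?_
    rw [pd_congr hU hx (fun y hy => gsymm hg hy q p)]
    ring
  have hA1 : ∑ i, ∑ j, (∑ a, X x a * pd a (fun y => g y i j) x) * (Y x i * Z x j)
      = ∑ a, ∑ p, ∑ q, pd a (fun y => g y p q) x * (X x a * Y x p * Z x q) := by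
    calc
      ∑ i, ∑ j, (∑ a, X x a * pd a (fun y => g y i j) x) * (Y x i * Z x j)
        = ∑ i, ∑ j, ∑ a, pd a (fun y => g y i j) x * (X x a * Y x i * Z x j) := by
          refine Finset.sum_congr rfl fun i _ => Finset.sum_congr rfl fun j _ => ?_
          rw [Finset.sum_mul]
          exact Finset.sum_congr rfl fun a _ => by ring
      _ = ∑ i, ∑ a, ∑ j, pd a (fun y => g y i j) x * (X x a * Y x i * Z x j) :=
          Finset.sum_congr rfl fun _ _ => Finset.sum_comm
      _ = ∑ a, ∑ p, ∑ q, pd a (fun y => g y p q) x * (X x a * Y x p * Z x q) :=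
          Finset.sum_comm
  rw [hA1]
  linarith [hGam]


theorem gV_congr_left {A B : VF n} (h : ∀ k, A x k = B x k) (W : VF n) :
    gV g A W x = gV g B W x := by
  unfold gV
  exact Finset.sum_congr rfl fun i _ => Finset.sum_congr rfl fun j _ => by rw [h i]

theorem gV_congr_right {A B : VF n} (h : ∀ k, A x k = B x k) (W : VF n) :
    gV g W A x = gV g W B x := by
  unfold gV
  exact Finset.sum_congr rfl fun i _ => Finset.sum_congr rfl fun j _ => by rw [h j]

theorem gV_sub_left (A B W : VF n) :
    gV g (fun y k => A y k - B y k) W x = gV g A W x - gV g B W x := by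
  unfold gV
  rw [← Finset.sum_sub_distrib]
  refine Finset.sum_congr rfl fun i _ => ?_
  rw [← Finset.sum_sub_distrib]
  exact Finset.sum_congr rfl fun j _ => by ring

theorem gV_add_left (A B W : VF n) :
    gV g (fun y k => A y k + B y k) W x = gV g A W x + gV g B W x := by
  unfold gV
  rw [← Finset.sum_add_distrib]
  refine Finset.sum_congr rfl fun i _ => ?_
  rw [← Finset.sum_add_distrib]
  exact Finset.sum_congr rfl fun j _ => by ring

theorem gV_smul_left (c : ℝ) (A W : VF n) :
    gV g (fun y k => c * A y k) W x = c * gV g A W x := by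
  unfold gV
  rw [Finset.mul_sum]
  refine Finset.sum_congr rfl fun i _ => ?_
  rw [Finset.mul_sum]
  exact Finset.sum_congr rfl fun j _ => by ring

theorem chr_symm (hU : IsOpen U) (hg : IsRiemannOn U g) (hx : x ∈ U) (k i j : Fin n) :
    chr g k i j x = chr g k j i x := by
  simp only [chr]
  congr 1
  refine Finset.sum_congr rfl fun l _ => ?_
  rw [pd_congr hU hx (fun y hy => gsymm hg hy i j)]
  ring

theorem torsion (hU : IsOpen U) (hg : IsRiemannOn U g) (hx : x ∈ U) (X Y : VF n)
    (k : Fin n) : covV g X Y x k = bracket X Y x k + covV g Y X x k := by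
  show fderiv ℝ (fun y => Y y k) x (X x) + ∑ i, ∑ j, chr g k i j x * X x i * Y x j = _
  have hs : ∑ i, ∑ j, chr g k i j x * Y x i * X x j
      = ∑ i, ∑ j, chr g k i j x * X x i * Y x j := by
    rw [Finset.sum_comm]
    refine Finset.sum_congr rfl fun i _ => Finset.sum_congr rfl fun j _ => ?_
    rw [chr_symm hU hg hx k j i]
    ring
  show _ = (fderiv ℝ (fun y => Y y k) x (X x) - fderiv ℝ (fun y => X y k) x (Y x))
      + (fderiv ℝ (fun y => X y k) x (Y x) + ∑ i, ∑ j, chr g k i j x * Y x i * X x j)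
  rw [hs]
  ring

/-- The Koszul formula. -/
theorem koszul (hU : IsOpen U) (hg : IsRiemannOn U g) (hX : SmoothSec U X)
    (hY : SmoothSec U Y) (hZ : SmoothSec U Z) (hx : x ∈ U) :
    2 * gV g (covV g X Y) Z x
      = dder X (gV g Y Z) x + dder Y (gV g X Z) x - dder Z (gV g X Y) x
        + gV g (bracket X Y) Z x - gV g (bracket X Z) Y x - gV g (bracket Y Z) X x := by
  rw [compat hU hg hX hY hZ hx, compat hU hg hY hX hZ hx, compat hU hg hZ hX hY hx]
  have f1 : gV g (covV g Y X) Z x = gV g (covV g X Y) Z x - gV g (bracket X Y) Z x := by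
    have h : ∀ k, covV g Y X x k = covV g X Y x k - bracket X Y x k := by
      intro k
      rw [torsion hU hg hx X Y k]; ring
    rw [gV_congr_left (B := fun y k => covV g X Y y k - bracket X Y y k) h Z, gV_sub_left]
  have t1 : gV g Y (covV g X Z) x - gV g Y (covV g Z X) x = gV g Y (bracket X Z) x := by
    rw [gV_symm hg hx Y (covV g X Z), gV_symm hg hx Y (covV g Z X),
      gV_symm hg hx Y (bracket X Z), ← gV_sub_left]
    exact gV_congr_left (fun k => by rw [torsion hU hg hx X Z k]; ring) Y
  have t2 : gV g X (covV g Y Z) x - gV g X (covV g Z Y) x = gV g X (bracket Y Z) x := by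
    rw [gV_symm hg hx X (covV g Y Z), gV_symm hg hx X (covV g Z Y),
      gV_symm hg hx X (bracket Y Z), ← gV_sub_left]
    exact gV_congr_left (fun k => by rw [torsion hU hg hx Y Z k]; ring) X
  have s1 : gV g (covV g Z X) Y x = gV g Y (covV g Z X) x := gV_symm hg hx _ _
  have s2 : gV g (covV g Z Y) X x = gV g X (covV g Z Y) x := gV_symm hg hx _ _
  have s3 : gV g (covV g Y Z) X x = gV g X (covV g Y Z) x := gV_symm hg hx _ _
  have s4 : gV g (bracket X Z) Y x = gV g Y (bracket X Z) x := gV_symm hg hx _ _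
  have s5 : gV g (bracket Y Z) X x = gV g X (bracket Y Z) x := gV_symm hg hx _ _
  have s6 : gV g (covV g X Z) Y x = gV g Y (covV g X Z) x := gV_symm hg hx _ _
  linarith


theorem gV_neg_left (A W : VF n) :
    gV g (fun y k => - A y k) W x = - gV g A W x := by
  unfold gV
  rw [← Finset.sum_neg_distrib]
  refine Finset.sum_congr rfl fun i _ => ?_
  rw [← Finset.sum_neg_distrib]
  exact Finset.sum_congr rfl fun j _ => by ring

theorem gV_eval_single (V : VF n) (m : Fin n) :
    gV g V (fun _ => Pi.single m 1) x = ∑ i, g x i m * V x i := by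
  unfold gV
  refine Finset.sum_congr rfl fun i _ => ?_
  simp only [Pi.single_apply, mul_ite, mul_one, mul_zero]
  rw [Finset.sum_ite_eq' Finset.univ m]
  simp

/-- For a closed 1-form: `α([X,Y]) = X α(Y) − Y α(X)` on `U`. -/
theorem closed_pair (hU : IsOpen U) (hx : x ∈ U) (hα : SmoothSec U α) (hcα : IsClosedOn U α)
    (hX : SmoothSec U X) (hY : SmoothSec U Y) :
    pairF α (bracket X Y) x = dder X (pairF α Y) x - dder Y (pairF α X) x := by
  have dα : ∀ i, DifferentiableAt ℝ (fun y => α y i) x := fun i => SmF.dat hU (hα i) hx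
  have dX : ∀ i, DifferentiableAt ℝ (fun y => X y i) x := fun i => SmF.dat hU (hX i) hx
  have dY : ∀ i, DifferentiableAt ℝ (fun y => Y y i) x := fun i => SmF.dat hU (hY i) hx
  have eX : dder X (pairF α Y) x
      = ∑ k, (dder X (fun y => α y k) x * Y x k + α x k * dder X (fun y => Y y k) x) := by
    unfold pairF
    rw [dder_sum (fun k _ => (dα k).fun_mul (dY k))]
    exact Finset.sum_congr rfl fun k _ => dder_mul (dα k) (dY k)
  have eY : dder Y (pairF α X) x
      = ∑ k, (dder Y (fun y => α y k) x * X x k + α x k * dder Y (fun y => X y k) x) := by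
    unfold pairF
    rw [dder_sum (fun k _ => (dα k).fun_mul (dX k))]
    exact Finset.sum_congr rfl fun k _ => dder_mul (dα k) (dX k)
  have eL : pairF α (bracket X Y) x
      = ∑ k, (α x k * dder X (fun y => Y y k) x - α x k * dder Y (fun y => X y k) x) := by
    unfold pairF bracket
    exact Finset.sum_congr rfl fun k _ => by rw [mul_sub]; rfl
  have key : ∑ k, dder X (fun y => α y k) x * Y x k
      = ∑ k, dder Y (fun y => α y k) x * X x k := by
    calc
      ∑ k, dder X (fun y => α y k) x * Y x k
        = ∑ k, ∑ s, pd s (fun y => α y k) x * (X x s * Y x k) := by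
          refine Finset.sum_congr rfl fun k _ => ?_
          rw [dder_eq_sum_pd (dα k), Finset.sum_mul]
          exact Finset.sum_congr rfl fun s _ => by ring
      _ = ∑ k, ∑ s, pd s (fun y => α y k) x * (Y x s * X x k) := by
          rw [Finset.sum_comm]
          refine Finset.sum_congr rfl fun k _ => Finset.sum_congr rfl fun s _ => ?_
          rw [hcα x hx s k]
          ring
      _ = ∑ k, dder Y (fun y => α y k) x * X x k := by
          refine Finset.sum_congr rfl fun k _ => ?_
          rw [dder_eq_sum_pd (dα k), Finset.sum_mul]
          exact Finset.sum_congr rfl fun s _ => by ring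
  rw [eX, eY, eL, Finset.sum_add_distrib, Finset.sum_add_distrib, Finset.sum_sub_distrib]
  rw [key]
  ring

/-- `[X,Y] f = X (Y f) − Y (X f)` for smooth data. -/
theorem dder_bracket (hU : IsOpen U) {f : Pt n → ℝ} (hf : SmF U f) (hX : SmoothSec U X)
    (hY : SmoothSec U Y) (hx : x ∈ U) :
    dder (bracket X Y) f x = dder X (dder Y f) x - dder Y (dder X f) x := by
  have hou : U ∈ nhds x := hU.mem_nhds hx
  have hfC : ContDiffOn ℝ (⊤ : ℕ∞) (fderiv ℝ f) U := hf.fderiv_of_isOpen hU (by simp)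
  have hFd : DifferentiableAt ℝ (fderiv ℝ f) x :=
    (hfC.contDiffAt hou).differentiableAt (by simp)
  have dX : ∀ i, DifferentiableAt ℝ (fun y => X y i) x := fun i => SmF.dat hU (hX i) hx
  have dY : ∀ i, DifferentiableAt ℝ (fun y => Y y i) x := fun i => SmF.dat hU (hY i) hx
  have hXd : DifferentiableAt ℝ X x := differentiableAt_pi.2 dX
  have hYd : DifferentiableAt ℝ Y x := differentiableAt_pi.2 dY
  have e1 : dder X (dder Y f) x
      = fderiv ℝ f x (fderiv ℝ Y x (X x)) + fderiv ℝ (fderiv ℝ f) x (X x) (Y x) := by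
    show fderiv ℝ (fun y => (fderiv ℝ f y) (Y y)) x (X x) = _
    rw [fderiv_clm_apply hFd hYd]
    simp
  have e2 : dder Y (dder X f) x
      = fderiv ℝ f x (fderiv ℝ X x (Y x)) + fderiv ℝ (fderiv ℝ f) x (Y x) (X x) := by
    show fderiv ℝ (fun y => (fderiv ℝ f y) (X y)) x (Y x) = _
    rw [fderiv_clm_apply hFd hXd]
    simp
  have hsym : fderiv ℝ (fderiv ℝ f) x (X x) (Y x) = fderiv ℝ (fderiv ℝ f) x (Y x) (X x) :=
    second_derivative_symmetric_of_eventually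
      (Filter.eventually_of_mem hou fun y hy => (SmF.dat hU hf hy).hasFDerivAt)
      hFd.hasFDerivAt (X x) (Y x)
  have e3 : dder (bracket X Y) f x
      = fderiv ℝ f x (fderiv ℝ Y x (X x)) - fderiv ℝ f x (fderiv ℝ X x (Y x)) := by
    show fderiv ℝ f x (bracket X Y x) = _
    rw [← map_sub (fderiv ℝ f x)]
    congr 1
    funext k
    have hbk : bracket X Y x k
        = fderiv ℝ (fun y => Y y k) x (X x) - fderiv ℝ (fun y => X y k) x (Y x) := rfl
    have hYp : fderiv ℝ Y x (X x) k = fderiv ℝ (fun y => Y y k) x (X x) := by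
      rw [fderiv_pi dY]; rfl
    have hXp : fderiv ℝ X x (Y x) k = fderiv ℝ (fun y => X y k) x (Y x) := by
      rw [fderiv_pi dX]; rfl
    rw [hbk, Pi.sub_apply, hYp, hXp]
  rw [e1, e2, e3, hsym]
  ring


/-- Contraction with `g⁻¹` inverts contraction with `g`. -/
theorem contract_ginv (hg : IsRiemannOn U g) (hx : x ∈ U) (v : Fin n → ℝ) (k : Fin n) :
    ∑ m, ginv g x m k * ∑ i, g x i m * v i = v k := by
  calc
    ∑ m, ginv g x m k * ∑ i, g x i m * v i
      = ∑ m, ∑ i, g x i m * ginv g x m k * v i := by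
        refine Finset.sum_congr rfl fun m _ => ?_
        rw [Finset.mul_sum]
        exact Finset.sum_congr rfl fun i _ => by ring
    _ = ∑ i, (∑ m, g x i m * ginv g x m k) * v i := by
        rw [Finset.sum_comm]
        exact Finset.sum_congr rfl fun i _ => (Finset.sum_mul _ _ _).symm
    _ = v k := by
        simp only [mul_ginv hg hx, ite_mul, one_mul, zero_mul]
        rw [Finset.sum_ite_eq' Finset.univ k]
        simp

/-- `2 g(∇_{α♯} β♯, W) = g([α♯,β♯], W) + W β(α♯)` for closed forms. -/
theorem star2 (hU : IsOpen U) (hg : IsRiemannOn U g) (hα : SmoothSec U α)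
    (hβ : SmoothSec U β) (hcα : IsClosedOn U α) (hcβ : IsClosedOn U β)
    (hW : SmoothSec U W) (hx : x ∈ U) :
    2 * gV g (covV g (sharp g α) (sharp g β)) W x
      = gV g (bracket (sharp g α) (sharp g β)) W x + dder W (pairF β (sharp g α)) x := by
  have hsA := smooth_sharp hU hg hα
  have hsB := smooth_sharp hU hg hβ
  rw [koszul hU hg hsA hsB hW hx]
  have r1 : dder (sharp g α) (gV g (sharp g β) W) x = dder (sharp g α) (pairF β W) x :=
    dder_congr hU hx (fun y hy => gV_sharp hg hy β W)
  have r2 : dder (sharp g β) (gV g (sharp g α) W) x = dder (sharp g β) (pairF α W) x :=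
    dder_congr hU hx (fun y hy => gV_sharp hg hy α W)
  have r3 : dder W (gV g (sharp g α) (sharp g β)) x = dder W (pairF α (sharp g β)) x :=
    dder_congr hU hx (fun y hy => gV_sharp hg hy α (sharp g β))
  have r4 : gV g (bracket (sharp g α) W) (sharp g β) x
      = dder (sharp g α) (pairF β W) x - dder W (pairF β (sharp g α)) x := by
    rw [gV_sharp' hg hx β (bracket (sharp g α) W)]
    exact closed_pair hU hx hβ hcβ hsA hW
  have r5 : gV g (bracket (sharp g β) W) (sharp g α) x
      = dder (sharp g β) (pairF α W) x - dder W (pairF α (sharp g β)) x := by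
    rw [gV_sharp' hg hx α (bracket (sharp g β) W)]
    exact closed_pair hU hx hα hcα hsB hW
  rw [r1, r2, r3, r4, r5]
  ring

/-- `2 ∇_{α♯} β♯ = [α♯,β♯] + (d β(α♯))♯` for closed forms. -/
theorem covV_sharp (hU : IsOpen U) (hg : IsRiemannOn U g) (hα : SmoothSec U α)
    (hβ : SmoothSec U β) (hcα : IsClosedOn U α) (hcβ : IsClosedOn U β)
    (hx : x ∈ U) (k : Fin n) :
    2 * covV g (sharp g α) (sharp g β) x k
      = bracket (sharp g α) (sharp g β) x k + sharp g (dF (pairF β (sharp g α))) x k := by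
  have hb : ∀ m : Fin n, (2:ℝ) * (∑ i, g x i m * covV g (sharp g α) (sharp g β) x i)
      = (∑ i, g x i m * bracket (sharp g α) (sharp g β) x i)
        + pd m (pairF β (sharp g α)) x := by
    intro m
    have h := star2 (W := fun _ => Pi.single m 1) hU hg hα hβ hcα hcβ
      (fun i => contDiffOn_const) hx
    rw [gV_eval_single, gV_eval_single] at h
    exact h
  calc
    2 * covV g (sharp g α) (sharp g β) x k
      = ∑ m, ginv g x m k * ((2:ℝ) * (∑ i, g x i m * covV g (sharp g α) (sharp g β) x i)) := by
        have h2 : ∑ m, ginv g x m k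
            * ((2:ℝ) * (∑ i, g x i m * covV g (sharp g α) (sharp g β) x i))
            = 2 * ∑ m, ginv g x m k * ∑ i, g x i m * covV g (sharp g α) (sharp g β) x i := by
          rw [Finset.mul_sum]
          exact Finset.sum_congr rfl fun m _ => by ring
        rw [h2, contract_ginv hg hx]
    _ = ∑ m, ginv g x m k * ((∑ i, g x i m * bracket (sharp g α) (sharp g β) x i)
          + pd m (pairF β (sharp g α)) x) :=
        Finset.sum_congr rfl fun m _ => by rw [hb m]
    _ = (∑ m, ginv g x m k * ∑ i, g x i m * bracket (sharp g α) (sharp g β) x i)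
          + ∑ m, ginv g x m k * pd m (pairF β (sharp g α)) x := by
        rw [← Finset.sum_add_distrib]
        exact Finset.sum_congr rfl fun m _ => by ring
    _ = bracket (sharp g α) (sharp g β) x k + sharp g (dF (pairF β (sharp g α))) x k := by
        rw [contract_ginv hg hx]
        rfl

/-- `2 g(∇_V γ♯, δ♯) = V γ(δ♯)?? = V δ(γ♯) − g([γ♯,δ♯],V)` for closed forms. -/
theorem star3 {V : VF n} {γ δ : OneForm n} (hU : IsOpen U) (hg : IsRiemannOn U g)
    (hγ : SmoothSec U γ) (hδ : SmoothSec U δ) (hcγ : IsClosedOn U γ) (hcδ : IsClosedOn U δ)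
    (hV : SmoothSec U V) (hx : x ∈ U) :
    2 * gV g (covV g V (sharp g γ)) (sharp g δ) x
      = dder V (pairF δ (sharp g γ)) x - gV g (bracket (sharp g γ) (sharp g δ)) V x := by
  have hsC := smooth_sharp hU hg hγ
  have hsD := smooth_sharp hU hg hδ
  rw [koszul hU hg hV hsC hsD hx]
  have q1 : dder V (gV g (sharp g γ) (sharp g δ)) x = dder V (pairF δ (sharp g γ)) x :=
    dder_congr hU hx (fun y hy => gV_sharp' hg hy δ (sharp g γ))
  have q2 : dder (sharp g γ) (gV g V (sharp g δ)) x = dder (sharp g γ) (pairF δ V) x :=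
    dder_congr hU hx (fun y hy => gV_sharp' hg hy δ V)
  have q3 : dder (sharp g δ) (gV g V (sharp g γ)) x = dder (sharp g δ) (pairF γ V) x :=
    dder_congr hU hx (fun y hy => gV_sharp' hg hy γ V)
  have q4 : gV g (bracket V (sharp g γ)) (sharp g δ) x
      = dder V (pairF δ (sharp g γ)) x - dder (sharp g γ) (pairF δ V) x := by
    rw [gV_sharp' hg hx δ (bracket V (sharp g γ))]
    exact closed_pair hU hx hδ hcδ hV hsC
  have q5 : gV g (bracket V (sharp g δ)) (sharp g γ) x
      = dder V (pairF γ (sharp g δ)) x - dder (sharp g δ) (pairF γ V) x := by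
    rw [gV_sharp' hg hx γ (bracket V (sharp g δ))]
    exact closed_pair hU hx hγ hcγ hV hsD
  have q6 : dder V (pairF γ (sharp g δ)) x = dder V (pairF δ (sharp g γ)) x :=
    dder_congr hU hx (fun y hy => pairF_symm hg hy γ δ)
  rw [q1, q2, q3, q4, q5, q6]
  ring


theorem gV_sub_right (A B W : VF n) :
    gV g W (fun y k => A y k - B y k) x = gV g W A x - gV g W B x := by
  unfold gV
  rw [← Finset.sum_sub_distrib]
  refine Finset.sum_congr rfl fun i _ => ?_
  rw [← Finset.sum_sub_distrib]
  exact Finset.sum_congr rfl fun j _ => by ring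

theorem gV_add_right (A B W : VF n) :
    gV g W (fun y k => A y k + B y k) x = gV g W A x + gV g W B x := by
  unfold gV
  rw [← Finset.sum_add_distrib]
  refine Finset.sum_congr rfl fun i _ => ?_
  rw [← Finset.sum_add_distrib]
  exact Finset.sum_congr rfl fun j _ => by ring

theorem gV_smul_right (c : ℝ) (A W : VF n) :
    gV g W (fun y k => c * A y k) x = c * gV g W A x := by
  unfold gV
  rw [Finset.mul_sum]
  refine Finset.sum_congr rfl fun i _ => ?_
  rw [Finset.mul_sum]
  exact Finset.sum_congr rfl fun j _ => by ring

theorem dder_vec_congr {V1 V2 : VF n} (h : V1 x = V2 x) (f : Pt n → ℝ) :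
    dder V1 f x = dder V2 f x := by
  unfold dder
  rw [h]

theorem dder_vec_add (A B : VF n) (f : Pt n → ℝ) :
    dder (fun y k => A y k + B y k) f x = dder A f x + dder B f x := by
  unfold dder
  have h : (fun k => A x k + B x k) = A x + B x := rfl
  show fderiv ℝ f x (fun k => A x k + B x k) = _
  rw [h, map_add]

theorem dder_vec_smul (c : ℝ) (A : VF n) (f : Pt n → ℝ) :
    dder (fun y k => c * A y k) f x = c * dder A f x := by
  unfold dder
  have h : (fun k => c * A x k) = c • A x := rfl
  show fderiv ℝ f x (fun k => c * A x k) = _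
  rw [h, _root_.map_smul, smul_eq_mul]

/-- The cross term `g(∇_{β'♯}γ'♯, ∇_{α'♯}δ'♯)` for closed forms. -/
theorem cross_term {α' β' γ' δ' : OneForm n} (hU : IsOpen U) (hg : IsRiemannOn U g)
    (hα' : SmoothSec U α') (hβ' : SmoothSec U β') (hγ' : SmoothSec U γ')
    (hδ' : SmoothSec U δ') (hcα' : IsClosedOn U α') (hcβ' : IsClosedOn U β')
    (hcγ' : IsClosedOn U γ') (hcδ' : IsClosedOn U δ') (hx : x ∈ U) :
    gV g (covV g (sharp g β') (sharp g γ')) (covV g (sharp g α') (sharp g δ')) x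
      = (1/4) * ( gV g (bracket (sharp g β') (sharp g γ')) (bracket (sharp g α') (sharp g δ')) x
          + (dder (sharp g α') (dder (sharp g δ') (pairF γ' (sharp g β'))) x
             - dder (sharp g δ') (dder (sharp g α') (pairF γ' (sharp g β'))) x)
          + (dder (sharp g β') (dder (sharp g γ') (pairF δ' (sharp g α'))) x
             - dder (sharp g γ') (dder (sharp g β') (pairF δ' (sharp g α'))) x)
          + gF g (dF (pairF γ' (sharp g β'))) (dF (pairF δ' (sharp g α'))) x ) := by
  have hsA := smooth_sharp hU hg hα'
  have hsB := smooth_sharp hU hg hβ'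
  have hsC := smooth_sharp hU hg hγ'
  have hsD := smooth_sharp hU hg hδ'
  set h1 := pairF γ' (sharp g β') with hh1
  set h2 := pairF δ' (sharp g α') with hh2
  have hsh1 : SmF U h1 := smooth_pairF hγ' hsB
  have hsh2 : SmF U h2 := smooth_pairF hδ' hsA
  have hQS : ∀ k, covV g (sharp g α') (sharp g δ') x k
      = (1/2) * (bracket (sharp g α') (sharp g δ') x k + sharp g (dF h2) x k) := by
    intro k
    have := covV_sharp hU hg hα' hδ' hcα' hcδ' hx k
    linarith
  have step1 := star2 hU hg hβ' hγ' hcβ' hcγ' (smooth_covV hU hg hsA hsD) hx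
  have step2 : dder (covV g (sharp g α') (sharp g δ')) h1 x
      = (1/2) * (dder (bracket (sharp g α') (sharp g δ')) h1 x
          + dder (sharp g (dF h2)) h1 x) := by
    calc
      dder (covV g (sharp g α') (sharp g δ')) h1 x
        = dder (fun y k => (1/2) * (bracket (sharp g α') (sharp g δ') y k
            + sharp g (dF h2) y k)) h1 x := dder_vec_congr (funext hQS) _
      _ = (1/2) * dder (fun y k => bracket (sharp g α') (sharp g δ') y k
            + sharp g (dF h2) y k) h1 x :=
          dder_vec_smul (1/2) (fun y k => bracket (sharp g α') (sharp g δ') y k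
            + sharp g (dF h2) y k) h1
      _ = (1/2) * (dder (bracket (sharp g α') (sharp g δ')) h1 x
            + dder (sharp g (dF h2)) h1 x) := by
          rw [dder_vec_add (bracket (sharp g α') (sharp g δ')) (sharp g (dF h2)) h1]
  have step3 : dder (sharp g (dF h2)) h1 x = gF g (dF h1) (dF h2) x := by
    rw [← pairF_dF hU hsh1 hx (sharp g (dF h2))]
    exact (gF_eq hg hx (dF h1) (dF h2)).symm
  have step4 : dder (bracket (sharp g α') (sharp g δ')) h1 x
      = dder (sharp g α') (dder (sharp g δ') h1) x
        - dder (sharp g δ') (dder (sharp g α') h1) x :=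
    dder_bracket hU hsh1 hsA hsD hx
  have step5 : gV g (bracket (sharp g β') (sharp g γ')) (covV g (sharp g α') (sharp g δ')) x
      = (1/2) * (gV g (bracket (sharp g β') (sharp g γ'))
            (bracket (sharp g α') (sharp g δ')) x
          + (dder (sharp g β') (dder (sharp g γ') h2) x
             - dder (sharp g γ') (dder (sharp g β') h2) x)) := by
    calc
      gV g (bracket (sharp g β') (sharp g γ')) (covV g (sharp g α') (sharp g δ')) x
        = gV g (bracket (sharp g β') (sharp g γ')) (fun y k => (1/2)
            * (bracket (sharp g α') (sharp g δ') y k + sharp g (dF h2) y k)) x :=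
          gV_congr_right (B := fun y k => (1/2) * (bracket (sharp g α') (sharp g δ') y k
            + sharp g (dF h2) y k)) hQS _
      _ = (1/2) * gV g (bracket (sharp g β') (sharp g γ'))
            (fun y k => bracket (sharp g α') (sharp g δ') y k + sharp g (dF h2) y k) x :=
          gV_smul_right (1/2) (fun y k => bracket (sharp g α') (sharp g δ') y k
            + sharp g (dF h2) y k) _
      _ = (1/2) * (gV g (bracket (sharp g β') (sharp g γ'))
              (bracket (sharp g α') (sharp g δ')) x
            + gV g (bracket (sharp g β') (sharp g γ')) (sharp g (dF h2)) x) := by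
          rw [gV_add_right (bracket (sharp g α') (sharp g δ')) (sharp g (dF h2))]
      _ = _ := by
          rw [gV_sharp' hg hx (dF h2) (bracket (sharp g β') (sharp g γ')),
            pairF_dF hU hsh2 hx (bracket (sharp g β') (sharp g γ')),
            dder_bracket hU hsh2 hsB hsC hx]
  linarith


theorem bracket_antisym (X Y : VF n) (x : Pt n) (k : Fin n) :
    bracket X Y x k = - bracket Y X x k := by
  unfold bracket
  ring

end RG

open RG

theorem mario_formula' {n : ℕ} (U : Set (Pt n)) (hU : IsOpen U)
    (g : Met n) (hg : IsRiemannOn U g)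
    (α β γ δ : OneForm n)
    (hα : SmoothSec U α) (hβ : SmoothSec U β) (hγ : SmoothSec U γ) (hδ : SmoothSec U δ)
    (hcα : IsClosedOn U α) (hcβ : IsClosedOn U β) (hcγ : IsClosedOn U γ)
    (hcδ : IsClosedOn U δ) :
    ∀ x ∈ U,
      gV g (Rcurv g (sharp g α) (sharp g β) (sharp g γ)) (sharp g δ) x =
        (1/4) * ( - dder (sharp g α) (dder (sharp g γ) (pairF δ (sharp g β))) x
                  + dder (sharp g α) (dder (sharp g δ) (pairF β (sharp g γ))) x
                  + dder (sharp g β) (dder (sharp g γ) (pairF δ (sharp g α))) x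
                  - dder (sharp g β) (dder (sharp g δ) (pairF α (sharp g γ))) x
                  - dder (sharp g γ) (dder (sharp g α) (pairF δ (sharp g β))) x
                  + dder (sharp g γ) (dder (sharp g β) (pairF δ (sharp g α))) x
                  + dder (sharp g δ) (dder (sharp g α) (pairF β (sharp g γ))) x
                  - dder (sharp g δ) (dder (sharp g β) (pairF α (sharp g γ))) x )
      + (1/4) * ( - gF g (dF (pairF γ (sharp g β))) (dF (pairF δ (sharp g α))) x
                  + gF g (dF (pairF γ (sharp g α))) (dF (pairF δ (sharp g β))) x )
      + (1/4) * ( gV g (bracket (sharp g δ) (sharp g α)) (bracket (sharp g β) (sharp g γ)) x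
                  - gV g (bracket (sharp g δ) (sharp g β)) (bracket (sharp g α) (sharp g γ)) x
                  + 2 * gV g (bracket (sharp g α) (sharp g β)) (bracket (sharp g γ) (sharp g δ)) x ) := by
  intro x hx
  have hsA := smooth_sharp hU hg hα
  have hsB := smooth_sharp hU hg hβ
  have hsC := smooth_sharp hU hg hγ
  have hsD := smooth_sharp hU hg hδ
  -- Splitting the curvature tensor.
  have hsplit : gV g (Rcurv g (sharp g α) (sharp g β) (sharp g γ)) (sharp g δ) x
      = gV g (covV g (sharp g α) (covV g (sharp g β) (sharp g γ))) (sharp g δ) x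
        - gV g (covV g (sharp g β) (covV g (sharp g α) (sharp g γ))) (sharp g δ) x
        - gV g (covV g (bracket (sharp g α) (sharp g β)) (sharp g γ)) (sharp g δ) x := by
    have e1 : gV g (Rcurv g (sharp g α) (sharp g β) (sharp g γ)) (sharp g δ) x
        = gV g (fun y k => (covV g (sharp g α) (covV g (sharp g β) (sharp g γ)) y k
            - covV g (sharp g β) (covV g (sharp g α) (sharp g γ)) y k)
            - covV g (bracket (sharp g α) (sharp g β)) (sharp g γ) y k) (sharp g δ) x := rfl
    rw [e1, gV_sub_left (fun y k => covV g (sharp g α) (covV g (sharp g β) (sharp g γ)) y k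
        - covV g (sharp g β) (covV g (sharp g α) (sharp g γ)) y k)
      (covV g (bracket (sharp g α) (sharp g β)) (sharp g γ)) (sharp g δ),
      gV_sub_left (covV g (sharp g α) (covV g (sharp g β) (sharp g γ)))
      (covV g (sharp g β) (covV g (sharp g α) (sharp g γ))) (sharp g δ)]
  -- First term via compatibility.
  have hT1 := compat hU hg hsA (smooth_covV hU hg hsB hsC) hsD hx
  have hT2 := compat hU hg hsB (smooth_covV hU hg hsA hsC) hsD hx
  -- Derivative terms.
  have hgBC : ∀ y ∈ U, gV g (covV g (sharp g β) (sharp g γ)) (sharp g δ) y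
      = (1/2) * (gV g (bracket (sharp g β) (sharp g γ)) (sharp g δ) y
          + dder (sharp g δ) (pairF γ (sharp g β)) y) := by
    intro y hy
    have := star2 hU hg hβ hγ hcβ hcγ hsD hy
    linarith
  have dGB : DifferentiableAt ℝ (gV g (bracket (sharp g β) (sharp g γ)) (sharp g δ)) x :=
    SmF.dat hU (smooth_gV hg (smooth_bracket hU hsB hsC) hsD) hx
  have dDB : DifferentiableAt ℝ (dder (sharp g δ) (pairF γ (sharp g β))) x :=
    SmF.dat hU (SmF.dder' hU (smooth_pairF hγ hsB) hsD) hx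
  have hd1 : dder (sharp g α) (gV g (covV g (sharp g β) (sharp g γ)) (sharp g δ)) x
      = (1/2) * (dder (sharp g α) (gV g (bracket (sharp g β) (sharp g γ)) (sharp g δ)) x
          + dder (sharp g α) (dder (sharp g δ) (pairF γ (sharp g β))) x) := by
    calc
      dder (sharp g α) (gV g (covV g (sharp g β) (sharp g γ)) (sharp g δ)) x
        = dder (sharp g α) (fun y => (1/2)
            * (gV g (bracket (sharp g β) (sharp g γ)) (sharp g δ) y
              + dder (sharp g δ) (pairF γ (sharp g β)) y)) x := dder_congr hU hx hgBC
      _ = (1/2) * dder (sharp g α) (fun y => gV g (bracket (sharp g β) (sharp g γ)) (sharp g δ) y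
            + dder (sharp g δ) (pairF γ (sharp g β)) y) x := dder_const_mul _ (dGB.add dDB)
      _ = _ := by rw [dder_add dGB dDB]
  have hgbrBC : ∀ y ∈ U, gV g (bracket (sharp g β) (sharp g γ)) (sharp g δ) y
      = dder (sharp g β) (pairF δ (sharp g γ)) y - dder (sharp g γ) (pairF δ (sharp g β)) y := by
    intro y hy
    rw [gV_sharp' hg hy δ (bracket (sharp g β) (sharp g γ))]
    exact closed_pair hU hy hδ hcδ hsB hsC
  have dBDC : DifferentiableAt ℝ (dder (sharp g β) (pairF δ (sharp g γ))) x :=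
    SmF.dat hU (SmF.dder' hU (smooth_pairF hδ hsC) hsB) hx
  have dCDB : DifferentiableAt ℝ (dder (sharp g γ) (pairF δ (sharp g β))) x :=
    SmF.dat hU (SmF.dder' hU (smooth_pairF hδ hsB) hsC) hx
  have hd1' : dder (sharp g α) (gV g (bracket (sharp g β) (sharp g γ)) (sharp g δ)) x
      = dder (sharp g α) (dder (sharp g β) (pairF δ (sharp g γ))) x
        - dder (sharp g α) (dder (sharp g γ) (pairF δ (sharp g β))) x := by
    calc
      dder (sharp g α) (gV g (bracket (sharp g β) (sharp g γ)) (sharp g δ)) x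
        = dder (sharp g α) (fun y => dder (sharp g β) (pairF δ (sharp g γ)) y
            - dder (sharp g γ) (pairF δ (sharp g β)) y) x := dder_congr hU hx hgbrBC
      _ = _ := by rw [dder_sub dBDC dCDB]
  -- Same for the second term (α ↔ β).
  have hgAC : ∀ y ∈ U, gV g (covV g (sharp g α) (sharp g γ)) (sharp g δ) y
      = (1/2) * (gV g (bracket (sharp g α) (sharp g γ)) (sharp g δ) y
          + dder (sharp g δ) (pairF γ (sharp g α)) y) := by
    intro y hy
    have := star2 hU hg hα hγ hcα hcγ hsD hy
    linarith
  have dGA : DifferentiableAt ℝ (gV g (bracket (sharp g α) (sharp g γ)) (sharp g δ)) x :=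
    SmF.dat hU (smooth_gV hg (smooth_bracket hU hsA hsC) hsD) hx
  have dDA : DifferentiableAt ℝ (dder (sharp g δ) (pairF γ (sharp g α))) x :=
    SmF.dat hU (SmF.dder' hU (smooth_pairF hγ hsA) hsD) hx
  have hd2 : dder (sharp g β) (gV g (covV g (sharp g α) (sharp g γ)) (sharp g δ)) x
      = (1/2) * (dder (sharp g β) (gV g (bracket (sharp g α) (sharp g γ)) (sharp g δ)) x
          + dder (sharp g β) (dder (sharp g δ) (pairF γ (sharp g α))) x) := by
    calc
      dder (sharp g β) (gV g (covV g (sharp g α) (sharp g γ)) (sharp g δ)) x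
        = dder (sharp g β) (fun y => (1/2)
            * (gV g (bracket (sharp g α) (sharp g γ)) (sharp g δ) y
              + dder (sharp g δ) (pairF γ (sharp g α)) y)) x := dder_congr hU hx hgAC
      _ = (1/2) * dder (sharp g β) (fun y => gV g (bracket (sharp g α) (sharp g γ)) (sharp g δ) y
            + dder (sharp g δ) (pairF γ (sharp g α)) y) x := dder_const_mul _ (dGA.add dDA)
      _ = _ := by rw [dder_add dGA dDA]
  have hgbrAC : ∀ y ∈ U, gV g (bracket (sharp g α) (sharp g γ)) (sharp g δ) y
      = dder (sharp g α) (pairF δ (sharp g γ)) y - dder (sharp g γ) (pairF δ (sharp g α)) y := by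
    intro y hy
    rw [gV_sharp' hg hy δ (bracket (sharp g α) (sharp g γ))]
    exact closed_pair hU hy hδ hcδ hsA hsC
  have dADC : DifferentiableAt ℝ (dder (sharp g α) (pairF δ (sharp g γ))) x :=
    SmF.dat hU (SmF.dder' hU (smooth_pairF hδ hsC) hsA) hx
  have dCDA : DifferentiableAt ℝ (dder (sharp g γ) (pairF δ (sharp g α))) x :=
    SmF.dat hU (SmF.dder' hU (smooth_pairF hδ hsA) hsC) hx
  have hd2' : dder (sharp g β) (gV g (bracket (sharp g α) (sharp g γ)) (sharp g δ)) x
      = dder (sharp g β) (dder (sharp g α) (pairF δ (sharp g γ))) x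
        - dder (sharp g β) (dder (sharp g γ) (pairF δ (sharp g α))) x := by
    calc
      dder (sharp g β) (gV g (bracket (sharp g α) (sharp g γ)) (sharp g δ)) x
        = dder (sharp g β) (fun y => dder (sharp g α) (pairF δ (sharp g γ)) y
            - dder (sharp g γ) (pairF δ (sharp g α)) y) x := dder_congr hU hx hgbrAC
      _ = _ := by rw [dder_sub dADC dCDA]
  -- Third term.
  have hT3 := star3 hU hg hγ hδ hcγ hcδ (smooth_bracket hU hsA hsB) hx
  have hT3' : dder (bracket (sharp g α) (sharp g β)) (pairF δ (sharp g γ)) x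
      = dder (sharp g α) (dder (sharp g β) (pairF δ (sharp g γ))) x
        - dder (sharp g β) (dder (sharp g α) (pairF δ (sharp g γ))) x :=
    dder_bracket hU (smooth_pairF hδ hsC) hsA hsB hx
  -- Cross terms.
  have hcross1 := cross_term hU hg hα hβ hγ hδ hcα hcβ hcγ hcδ hx
  have hcross2 := cross_term hU hg hβ hα hγ hδ hcβ hcα hcγ hcδ hx
  -- Bracket symmetry manipulations.
  have e1 : gV g (bracket (sharp g β) (sharp g γ)) (bracket (sharp g α) (sharp g δ)) x
      = - gV g (bracket (sharp g δ) (sharp g α)) (bracket (sharp g β) (sharp g γ)) x := by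
    rw [gV_symm hg hx (bracket (sharp g β) (sharp g γ)) (bracket (sharp g α) (sharp g δ))]
    calc
      gV g (bracket (sharp g α) (sharp g δ)) (bracket (sharp g β) (sharp g γ)) x
        = gV g (fun y k => -(bracket (sharp g δ) (sharp g α) y k))
            (bracket (sharp g β) (sharp g γ)) x :=
          gV_congr_left (B := fun y k => -(bracket (sharp g δ) (sharp g α) y k))
            (fun k => bracket_antisym _ _ x k) _
      _ = _ := gV_neg_left _ _
  have e2 : gV g (bracket (sharp g α) (sharp g γ)) (bracket (sharp g β) (sharp g δ)) x
      = - gV g (bracket (sharp g δ) (sharp g β)) (bracket (sharp g α) (sharp g γ)) x := by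
    rw [gV_symm hg hx (bracket (sharp g α) (sharp g γ)) (bracket (sharp g β) (sharp g δ))]
    calc
      gV g (bracket (sharp g β) (sharp g δ)) (bracket (sharp g α) (sharp g γ)) x
        = gV g (fun y k => -(bracket (sharp g δ) (sharp g β) y k))
            (bracket (sharp g α) (sharp g γ)) x :=
          gV_congr_left (B := fun y k => -(bracket (sharp g δ) (sharp g β) y k))
            (fun k => bracket_antisym _ _ x k) _
      _ = _ := gV_neg_left _ _
  have e3 : gV g (bracket (sharp g γ) (sharp g δ)) (bracket (sharp g α) (sharp g β)) x
      = gV g (bracket (sharp g α) (sharp g β)) (bracket (sharp g γ) (sharp g δ)) x :=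
    gV_symm hg hx _ _
  -- Pairing symmetry inside second derivatives.
  have p1 : dder (sharp g α) (dder (sharp g δ) (pairF γ (sharp g β))) x
      = dder (sharp g α) (dder (sharp g δ) (pairF β (sharp g γ))) x :=
    dder_congr hU hx (fun y hy => dder_congr hU hy (fun z hz => pairF_symm hg hz γ β))
  have p2 : dder (sharp g δ) (dder (sharp g α) (pairF γ (sharp g β))) x
      = dder (sharp g δ) (dder (sharp g α) (pairF β (sharp g γ))) x :=
    dder_congr hU hx (fun y hy => dder_congr hU hy (fun z hz => pairF_symm hg hz γ β))
  have p3 : dder (sharp g β) (dder (sharp g δ) (pairF γ (sharp g α))) x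
      = dder (sharp g β) (dder (sharp g δ) (pairF α (sharp g γ))) x :=
    dder_congr hU hx (fun y hy => dder_congr hU hy (fun z hz => pairF_symm hg hz γ α))
  have p4 : dder (sharp g δ) (dder (sharp g β) (pairF γ (sharp g α))) x
      = dder (sharp g δ) (dder (sharp g β) (pairF α (sharp g γ))) x :=
    dder_congr hU hx (fun y hy => dder_congr hU hy (fun z hz => pairF_symm hg hz γ α))
  linarith

/-- **Mario's formula** (covariant formula for the curvature): for closed smooth
1-forms `α β γ δ` on a Riemannian manifold,
`g(R(α♯,β♯)γ♯,δ♯) = R₁ + R₂ + R₃` as in the statement. -/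
theorem mario_formula {n : ℕ} (U : Set (Pt n)) (hU : IsOpen U)
    (g : Met n) (hg : IsRiemannOn U g)
    (α β γ δ : OneForm n)
    (hα : SmoothSec U α) (hβ : SmoothSec U β) (hγ : SmoothSec U γ) (hδ : SmoothSec U δ)
    (hcα : IsClosedOn U α) (hcβ : IsClosedOn U β) (hcγ : IsClosedOn U γ)
    (hcδ : IsClosedOn U δ) :
    ∀ x ∈ U,
      gV g (Rcurv g (sharp g α) (sharp g β) (sharp g γ)) (sharp g δ) x =
        (1/4) * ( - dder (sharp g α) (dder (sharp g γ) (pairF δ (sharp g β))) x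
                  + dder (sharp g α) (dder (sharp g δ) (pairF β (sharp g γ))) x
                  + dder (sharp g β) (dder (sharp g γ) (pairF δ (sharp g α))) x
                  - dder (sharp g β) (dder (sharp g δ) (pairF α (sharp g γ))) x
                  - dder (sharp g γ) (dder (sharp g α) (pairF δ (sharp g β))) x
                  + dder (sharp g γ) (dder (sharp g β) (pairF δ (sharp g α))) x
                  + dder (sharp g δ) (dder (sharp g α) (pairF β (sharp g γ))) x
                  - dder (sharp g δ) (dder (sharp g β) (pairF α (sharp g γ))) x )
      + (1/4) * ( - gF g (dF (pairF γ (sharp g β))) (dF (pairF δ (sharp g α))) x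
                  + gF g (dF (pairF γ (sharp g α))) (dF (pairF δ (sharp g β))) x )
      + (1/4) * ( gV g (bracket (sharp g δ) (sharp g α)) (bracket (sharp g β) (sharp g γ)) x
                  - gV g (bracket (sharp g δ) (sharp g β)) (bracket (sharp g α) (sharp g γ)) x
                  + 2 * gV g (bracket (sharp g α) (sharp g β)) (bracket (sharp g γ) (sharp g δ)) x ) :=
  mario_formula' U hU g hg α β γ δ hα hβ hγ hδ hcα hcβ hcγ hcδ
end
end

section
/- For any smooth 1-forms α, β on B: (p*β)♯( ‖p*α‖²_{g_E⁻¹} ) = ( β♯( ‖α‖²_{g_B⁻¹} ) ) ∘ p, i.e. the directional derivative on E of the squared co-metric norm of p*α along (p*β)♯ is the pullback of the corresponding directional derivative on B. -/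
/-!
Local-coordinate (chart) model of a Riemannian manifold: points are elements
of `ℝⁿ`, vector fields and 1-forms are given by their component functions on
an open set `U`, and the metric by its matrix of components.
-/

noncomputable section

open RG

namespace RG

variable {m nb : ℕ}

/-- Pullback `p*α` of a 1-form along a map `p`. -/
def pbF (p : Pt m → Pt nb) (α : OneForm nb) : OneForm m :=
  fun x i => ∑ j, α (p x) j * fderiv ℝ p x (Pi.single i 1) j

/-- Pullback `(T_x p)* ξ` of a covector `ξ` at `p x` to a covector at `x`. -/
def pbCov (p : Pt m → Pt nb) (x : Pt m) (ξ : Fin nb → ℝ) : Fin m → ℝ :=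
  fun i => ∑ j, ξ j * fderiv ℝ p x (Pi.single i 1) j

/-- Inner product of tangent vectors at a point, w.r.t. the metric `g`. -/
def ip {n : ℕ} (g : Met n) (x : Pt n) (v w : Fin n → ℝ) : ℝ :=
  ∑ i, ∑ j, g x i j * v i * w j

/-- Inner product of cotangent vectors at a point, w.r.t. the co-metric `g⁻¹`. -/
def ipCo {n : ℕ} (g : Met n) (x : Pt n) (ξ η : Fin n → ℝ) : ℝ :=
  ∑ i, ∑ j, ginv g x i j * ξ i * η j

/-- `v` is a vertical tangent vector at `x` (tangent to the fiber of `p`). -/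
def IsVert (p : Pt m → Pt nb) (x : Pt m) (v : Fin m → ℝ) : Prop :=
  fderiv ℝ p x v = 0

/-- `v` is a horizontal tangent vector at `x`: `g_E`-orthogonal to the vertical space. -/
def IsHor (gE : Met m) (p : Pt m → Pt nb) (x : Pt m) (v : Fin m → ℝ) : Prop :=
  ∀ w, IsVert p x w → ip gE x v w = 0

/-- `p` is a Riemannian submersion of `(U_E, g_E)` onto `(g_B)`: it is smooth,
its differential is surjective at each point of `U_E`, and `T_x p` is an
isometry from the horizontal space `Hor_x(p)` onto the tangent space below. -/
def IsRiemSubmersionOn (UE : Set (Pt m)) (gE : Met m) (gB : Met nb)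
    (p : Pt m → Pt nb) : Prop :=
  (∀ i, ContDiffOn ℝ (⊤ : ℕ∞) (fun x => p x i) UE) ∧
  ∀ x ∈ UE, Function.Surjective (fun v => fderiv ℝ p x v) ∧
    ∀ v w : Fin m → ℝ, IsHor gE p x v → IsHor gE p x w →
      ip gB (p x) (fderiv ℝ p x v) (fderiv ℝ p x w) = ip gE x v w

end RG


section Aux
open Matrix

lemma auxIpDot {n : ℕ} (g : Matrix (Fin n) (Fin n) ℝ) (v w : Fin n → ℝ) :
    (∑ i, ∑ j, g i j * v i * w j) = v ⬝ᵥ g.mulVec w := by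
  simp only [dotProduct, Matrix.mulVec, Finset.mul_sum]
  exact Finset.sum_congr rfl fun i _ => Finset.sum_congr rfl fun j _ => by ring


lemma dot_symm {n : ℕ} {G : Matrix (Fin n) (Fin n) ℝ} (hGs : G.IsSymm)
    (x z : Fin n → ℝ) : x ⬝ᵥ G.mulVec z = G.mulVec x ⬝ᵥ z := by
  rw [Matrix.dotProduct_mulVec, ← Matrix.mulVec_transpose, hGs]

lemma trans_dot {m nb : ℕ} (A : Matrix (Fin nb) (Fin m) ℝ) (ξ : Fin nb → ℝ) (z : Fin m → ℝ) :
    (Aᵀ.mulVec ξ) ⬝ᵥ z = ξ ⬝ᵥ A.mulVec z := by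
  rw [Matrix.mulVec_transpose, ← Matrix.dotProduct_mulVec]

lemma key_matrix {m nb : ℕ} (G : Matrix (Fin m) (Fin m) ℝ) (H : Matrix (Fin nb) (Fin nb) ℝ)
    (A : Matrix (Fin nb) (Fin m) ℝ)
    (hGs : G.IsSymm) (hGp : G.PosDef) (hHp : H.PosDef)
    (hsurj : Function.Surjective A.mulVec)
    (hiso : ∀ v w : Fin m → ℝ,
      (∀ z, A.mulVec z = 0 → v ⬝ᵥ G.mulVec z = 0) →
      (∀ z, A.mulVec z = 0 → w ⬝ᵥ G.mulVec z = 0) →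
      (A.mulVec v) ⬝ᵥ H.mulVec (A.mulVec w) = v ⬝ᵥ G.mulVec w) :
    A * G⁻¹ * Aᵀ = H⁻¹ := by
  have hGi : IsUnit G.det := hGp.det_pos.ne'.isUnit
  have hGinv_symm : (G⁻¹).IsSymm := by
    unfold Matrix.IsSymm
    rw [Matrix.transpose_nonsing_inv, hGs.eq]
  set M := A * G⁻¹ * Aᵀ with hM
  have hMsymm : M.IsSymm := by
    unfold Matrix.IsSymm
    rw [hM, Matrix.transpose_mul, Matrix.transpose_mul, Matrix.transpose_transpose,
      hGinv_symm.eq, Matrix.mul_assoc]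
  -- G ∘ G⁻¹ cancellation on vectors
  have hGG : ∀ u : Fin m → ℝ, G.mulVec (G⁻¹.mulVec u) = u := by
    intro u
    rw [Matrix.mulVec_mulVec, Matrix.mul_nonsing_inv G hGi, Matrix.one_mulVec]
  -- the candidate horizontal lifts
  have hhor : ∀ ξ : Fin nb → ℝ, ∀ z, A.mulVec z = 0 →
      (G⁻¹.mulVec (Aᵀ.mulVec ξ)) ⬝ᵥ G.mulVec z = 0 := by
    intro ξ z hz
    rw [dot_symm hGs, hGG, trans_dot, hz, dotProduct_zero]
  have hAv : ∀ ξ, A.mulVec (G⁻¹.mulVec (Aᵀ.mulVec ξ)) = M.mulVec ξ := by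
    intro ξ
    rw [Matrix.mulVec_mulVec, Matrix.mulVec_mulVec, hM, Matrix.mul_assoc]
  have hGv : ∀ ξ η, (G⁻¹.mulVec (Aᵀ.mulVec ξ)) ⬝ᵥ G.mulVec (G⁻¹.mulVec (Aᵀ.mulVec η))
      = ξ ⬝ᵥ M.mulVec η := by
    intro ξ η
    rw [hGG, dotProduct_comm, trans_dot, hAv, dot_symm hMsymm, dotProduct_comm]
  have hMHM : ∀ ξ η, ξ ⬝ᵥ (M * H * M).mulVec η = ξ ⬝ᵥ M.mulVec η := by
    intro ξ η
    have h1 := hiso (G⁻¹.mulVec (Aᵀ.mulVec ξ)) (G⁻¹.mulVec (Aᵀ.mulVec η)) (hhor ξ) (hhor η)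
    rw [hAv, hAv, hGv] at h1
    rw [← h1, ← dot_symm hMsymm ξ (H *ᵥ (M *ᵥ η)), Matrix.mulVec_mulVec, Matrix.mulVec_mulVec]
  have hMHMeq : M * H * M = M := by
    ext i j
    have := hMHM (Pi.single i 1) (Pi.single j 1)
    simpa [Matrix.mulVec_single, single_dotProduct] using this
  -- M is positive definite
  have hMpd : M.PosDef := by
    refine Matrix.PosDef.of_dotProduct_mulVec_pos ?_ ?_
    · show Mᴴ = M
      rw [Matrix.conjTranspose_eq_transpose_of_trivial, hMsymm.eq]
    · intro ξ hξ
      have hAt : Aᵀ.mulVec ξ ≠ 0 := by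
        intro h0
        apply hξ
        have h1 : ∀ u : Fin nb → ℝ, ξ ⬝ᵥ u = 0 := by
          intro u
          obtain ⟨v, hv⟩ := hsurj u
          rw [← hv, ← trans_dot, h0, zero_dotProduct]
        have := h1 ξ
        rwa [dotProduct_self_eq_zero] at this
      have : star ξ ⬝ᵥ M.mulVec ξ
          = star (Aᵀ.mulVec ξ) ⬝ᵥ (G⁻¹).mulVec (Aᵀ.mulVec ξ) := by
        rw [star_trivial, star_trivial, ← hAv, ← trans_dot]
      rw [this]
      exact hGp.inv.dotProduct_mulVec_pos hAt
  have hMi : IsUnit M.det := hMpd.det_pos.ne'.isUnit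
  have hHM : H * M = 1 := by
    have h2 : M⁻¹ * (M * (H * M)) = M⁻¹ * M := by
      rw [← mul_assoc M H M]; exact congrArg _ hMHMeq
    rwa [← mul_assoc, Matrix.nonsing_inv_mul M hMi, one_mul] at h2
  exact (Matrix.inv_eq_right_inv hHM).symm


lemma contDiffOn_det {k n : ℕ} {U : Set (Pt k)} (g : Pt k → Matrix (Fin n) (Fin n) ℝ)
    (hg : ∀ i j, ContDiffOn ℝ (⊤ : ℕ∞) (fun y => g y i j) U) :
    ContDiffOn ℝ (⊤ : ℕ∞) (fun y => (g y).det) U := by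
  simp only [Matrix.det_apply]
  apply ContDiffOn.sum
  intro σ _
  have : ContDiffOn ℝ (⊤ : ℕ∞) (fun y => ∏ i, g y (σ i) i) U :=
    contDiffOn_prod fun i _ => hg (σ i) i
  simpa [Units.smul_def, zsmul_eq_mul] using this.const_smul ((Equiv.Perm.sign σ : ℤ) : ℝ)

lemma contDiffOn_inv_entries {k n : ℕ} {U : Set (Pt k)} (g : Pt k → Matrix (Fin n) (Fin n) ℝ)
    (hg : ∀ i j, ContDiffOn ℝ (⊤ : ℕ∞) (fun y => g y i j) U)
    (hdet : ∀ y ∈ U, (g y).det ≠ 0) (i j : Fin n) :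
    ContDiffOn ℝ (⊤ : ℕ∞) (fun y => (g y)⁻¹ i j) U := by
  have hadj : ContDiffOn ℝ (⊤ : ℕ∞) (fun y => (g y).adjugate i j) U := by
    simp only [Matrix.adjugate_apply]
    apply contDiffOn_det (fun y => (g y).updateRow j (Pi.single i 1))
    intro a b
    rcases eq_or_ne a j with rfl | ha
    · simp only [Matrix.updateRow_self]
      exact contDiffOn_const
    · simp only [Matrix.updateRow_ne ha]
      exact hg a b
  have hd : ContDiffOn ℝ (⊤ : ℕ∞) (fun y => ((g y).det)⁻¹) U :=
    (contDiffOn_det g hg).inv hdet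
  have : ContDiffOn ℝ (⊤ : ℕ∞) (fun y => ((g y).det)⁻¹ * (g y).adjugate i j) U := hd.mul hadj
  refine this.congr fun y _ => ?_
  rw [Matrix.inv_def, Matrix.smul_apply, Ring.inverse_eq_inv, smul_eq_mul]

lemma fderiv_eq_mulVec {m nb : ℕ} (p : Pt m → Pt nb) (y : Pt m) (v : Fin m → ℝ) :
    fderiv ℝ p y v = (Matrix.of fun j i => fderiv ℝ p y (Pi.single i 1) j).mulVec v := by
  have hv : v = ∑ i, v i • (Pi.single i 1 : Fin m → ℝ) := by
    funext k
    rw [Finset.sum_apply]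
    simp [Pi.single_apply]
  conv_lhs => rw [hv]
  rw [map_sum]
  funext j
  rw [Finset.sum_apply]
  simp only [ContinuousLinearMap.map_smul]
  simp only [Matrix.mulVec, dotProduct, Matrix.of_apply, Pi.smul_apply, smul_eq_mul]
  exact Finset.sum_congr rfl fun i _ => mul_comm _ _

end Aux


section Aux2
open Matrix

lemma auxInvSymm {n : ℕ} {G : Matrix (Fin n) (Fin n) ℝ} (h : G.IsSymm) : (G⁻¹).IsSymm := by
  unfold Matrix.IsSymm
  rw [Matrix.transpose_nonsing_inv, h.eq]

lemma auxSharp {n : ℕ} {N : Matrix (Fin n) (Fin n) ℝ} (h : N.IsSymm) (ξ : Fin n → ℝ)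
    (k : Fin n) : (∑ i, N i k * ξ i) = N.mulVec ξ k := by
  simp only [Matrix.mulVec, dotProduct]
  exact Finset.sum_congr rfl fun i _ => by rw [h.apply i k]

end Aux2

open Matrix

/-- For a Riemannian submersion `p : (E,g_E) → (B,g_B)` and smooth 1-forms `α β`
on `B`: `(p*β)♯(‖p*α‖²_{g_E⁻¹}) = (β♯(‖α‖²_{g_B⁻¹})) ∘ p`. -/
theorem pullback_derivative_of_norm {m nb : ℕ}
    (UE : Set (Pt m)) (UB : Set (Pt nb)) (hUE : IsOpen UE) (hUB : IsOpen UB)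
    (gE : Met m) (gB : Met nb) (hgE : IsRiemannOn UE gE) (hgB : IsRiemannOn UB gB)
    (p : Pt m → Pt nb) (hp : Set.MapsTo p UE UB)
    (hsub : IsRiemSubmersionOn UE gE gB p)
    (α β : OneForm nb) (hα : SmoothSec UB α) (hβ : SmoothSec UB β) :
    ∀ x ∈ UE,
      dder (sharp gE (pbF p β)) (gF gE (pbF p α) (pbF p α)) x
        = dder (sharp gB β) (gF gB α α) (p x) := by
  intro x hx
  classical
  have hdet : ∀ y ∈ UB, (gB y).det ≠ 0 := fun y hy => ((hgB.2 y hy).2.det_pos).ne'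
  -- the key pointwise matrix identity A G⁻¹ Aᵀ = H⁻¹
  have key : ∀ y ∈ UE,
      (Matrix.of fun j i => fderiv ℝ p y (Pi.single i 1) j : Matrix (Fin nb) (Fin m) ℝ)
          * (gE y)⁻¹ *
        (Matrix.of fun j i => fderiv ℝ p y (Pi.single i 1) j : Matrix (Fin nb) (Fin m) ℝ)ᵀ
          = (gB (p y))⁻¹ := by
    intro y hy
    set A := (Matrix.of fun j i => fderiv ℝ p y (Pi.single i 1) j : Matrix (Fin nb) (Fin m) ℝ)
      with hA
    have hf : (fun v => fderiv ℝ p y v) = A.mulVec := funext fun v => fderiv_eq_mulVec p y v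
    obtain ⟨hsurj, hiso⟩ := hsub.2 y hy
    rw [hf] at hsurj
    apply key_matrix _ _ _ (hgE.2 y hy).1 (hgE.2 y hy).2 (hgB.2 (p y) (hp hy)).2 hsurj
    intro v w hv hw
    have hv' : IsHor gE p y v := by
      intro z hz
      have hz' : A.mulVec z = 0 := by rw [← congrFun hf z]; exact hz
      show (∑ i, ∑ j, gE y i j * v i * z j) = 0
      rw [auxIpDot]; exact hv z hz'
    have hw' : IsHor gE p y w := by
      intro z hz
      have hz' : A.mulVec z = 0 := by rw [← congrFun hf z]; exact hz
      show (∑ i, ∑ j, gE y i j * w i * z j) = 0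
      rw [auxIpDot]; exact hw z hz'
    have h2 := hiso v w hv' hw'
    have h3 : (fderiv ℝ p y v) ⬝ᵥ (gB (p y)).mulVec (fderiv ℝ p y w)
        = v ⬝ᵥ (gE y).mulVec w := by
      rw [← auxIpDot, ← auxIpDot]; exact h2
    rw [congrFun hf v, congrFun hf w] at h3
    exact h3
  -- pointwise equality of the squared norms
  have hfun : ∀ y ∈ UE, gF gE (pbF p α) (pbF p α) y = gF gB α α (p y) := by
    intro y hy
    set A := (Matrix.of fun j i => fderiv ℝ p y (Pi.single i 1) j : Matrix (Fin nb) (Fin m) ℝ)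
      with hA
    set a := α (p y) with ha
    have hpb : pbF p α y = Aᵀ.mulVec a := by
      funext i
      show (∑ j, α (p y) j * fderiv ℝ p y (Pi.single i 1) j) = ∑ j, Aᵀ i j * a j
      exact Finset.sum_congr rfl fun j _ => by
        rw [Matrix.transpose_apply, hA, Matrix.of_apply, mul_comm, ha]
    show (∑ i, ∑ j, (gE y)⁻¹ i j * pbF p α y i * pbF p α y j)
        = ∑ i, ∑ j, (gB (p y))⁻¹ i j * a i * a j
    rw [auxIpDot, auxIpDot, hpb, trans_dot, Matrix.mulVec_mulVec, Matrix.mulVec_mulVec,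
      key y hy]
  -- identification of the pushed-forward sharp vector
  have hGinvS : ((gE x)⁻¹).IsSymm := auxInvSymm (hgE.2 x hx).1
  have hHinvS : ((gB (p x))⁻¹).IsSymm := auxInvSymm (hgB.2 (p x) (hp hx)).1
  set A := (Matrix.of fun j i => fderiv ℝ p x (Pi.single i 1) j : Matrix (Fin nb) (Fin m) ℝ)
    with hA
  set b := β (p x) with hb
  have hpbβ : pbF p β x = Aᵀ.mulVec b := by
    funext i
    show (∑ j, β (p x) j * fderiv ℝ p x (Pi.single i 1) j) = ∑ j, Aᵀ i j * b j
    exact Finset.sum_congr rfl fun j _ => by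
      rw [Matrix.transpose_apply, hA, Matrix.of_apply, mul_comm, hb]
  have h1 : sharp gE (pbF p β) x = (gE x)⁻¹.mulVec (Aᵀ.mulVec b) := by
    funext k
    show (∑ i, (gE x)⁻¹ i k * pbF p β x i) = _
    rw [hpbβ, auxSharp hGinvS]
  have hsharp : fderiv ℝ p x (sharp gE (pbF p β) x) = sharp gB β (p x) := by
    rw [h1, fderiv_eq_mulVec, ← hA, Matrix.mulVec_mulVec, Matrix.mulVec_mulVec, key x hx]
    funext k
    show ((gB (p x))⁻¹.mulVec b) k = ∑ i, (gB (p x))⁻¹ i k * b i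
    rw [auxSharp hHinvS]
  -- smoothness of the base norm function
  have hfB : ContDiffOn ℝ (⊤ : ℕ∞) (gF gB α α) UB := by
    show ContDiffOn ℝ (⊤ : ℕ∞) (fun y => ∑ i, ∑ j, (gB y)⁻¹ i j * α y i * α y j) UB
    apply ContDiffOn.sum; intro i _
    apply ContDiffOn.sum; intro j _
    exact ((contDiffOn_inv_entries gB hgB.1 hdet i j).mul (hα i)).mul (hα j)
  have hdp : DifferentiableAt ℝ p x :=
    differentiableAt_pi.2 fun j =>
      ((hsub.1 j).contDiffAt (hUE.mem_nhds hx)).differentiableAt (by simp)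
  have hdfB : DifferentiableAt ℝ (gF gB α α) (p x) :=
    (hfB.contDiffAt (hUB.mem_nhds (hp hx))).differentiableAt (by simp)
  have hEv : gF gE (pbF p α) (pbF p α) =ᶠ[nhds x] (gF gB α α ∘ p) :=
    Filter.eventually_of_mem (hUE.mem_nhds hx) fun y hy => hfun y hy
  show fderiv ℝ (gF gE (pbF p α) (pbF p α)) x (sharp gE (pbF p β) x)
      = fderiv ℝ (gF gB α α) (p x) (sharp gB β (p x))
  rw [hEv.fderiv_eq, fderiv_comp (x := x) hdfB hdp]
  simp only [ContinuousLinearMap.comp_apply]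
  rw [hsharp]
end
end
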